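/- Let V be a vector space over ℝ and let a, a', b, b' ∈ V with a ≠ a' and b ≠ b'. Then there exists t ∈ [0,1] with (1−t)•a + t•b = (1−t)•a' + t•b' if and only if there exists λ < 0 such that b − b' = λ•(a − a'). -/

import Mathlib

/-- Two linear paths `t ↦ (1-t)•a + t•b` and `t ↦ (1-t)•a' + t•b'` between distinct
endpoints collide at some `t ∈ [0,1]` iff `b - b'` is a negative multiple of `a - a'`. -/
theorem collide_iff_neg_multiple {V : Type*} [AddCommGroup V] [Module ℝ V]
    (a a' b b' : V) (ha : a ≠ a') (hb : b ≠ b') :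
    (∃ t ∈ Set.Icc (0 : ℝ) 1, (1 - t) • a + t • b = (1 - t) • a' + t • b') ↔
    ∃ l : ℝ, l < 0 ∧ b - b' = l • (a - a') := by
  constructor
  · rintro ⟨t, ⟨ht0, ht1⟩, heq⟩
    have key : (1 - t) • (a - a') + t • (b - b') = 0 := by
      rw [← sub_eq_zero] at heq
      rw [← heq]; module
    rcases eq_or_lt_of_le ht0 with h0 | h0
    · exfalso
      rw [← h0] at key
      simp only [sub_zero, one_smul, zero_smul, add_zero] at key
      exact ha (sub_eq_zero.mp key)
    rcases eq_or_lt_of_le ht1 with h1 | h1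
    · exfalso
      rw [h1] at key
      simp only [sub_self, zero_smul, one_smul, zero_add] at key
      exact hb (sub_eq_zero.mp key)
    · refine ⟨-((1 - t) / t), ?_, ?_⟩
      · have : (0:ℝ) < (1 - t) / t := div_pos (by linarith) h0
        linarith
      · have ht : t ≠ 0 := ne_of_gt h0
        have : t • (b - b') = -((1 - t) • (a - a')) := by
          rw [eq_neg_iff_add_eq_zero, add_comm]; exact key
        calc b - b' = t⁻¹ • (t • (b - b')) := by rw [smul_smul, inv_mul_cancel₀ ht, one_smul]
          _ = t⁻¹ • (-((1 - t) • (a - a'))) := by rw [this]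
          _ = (-((1 - t) / t)) • (a - a') := by
              rw [smul_neg, smul_smul, ← neg_smul]
              congr 1
              field_simp
  · rintro ⟨l, hl, hbb⟩
    have h1 : (1 : ℝ) - l ≠ 0 := by linarith
    refine ⟨1 / (1 - l), ⟨le_of_lt (div_pos one_pos (by linarith)), ?_⟩, ?_⟩
    · rw [div_le_one (by linarith)]; linarith
    · rw [← sub_eq_zero]
      have key : (1 - 1 / (1 - l)) • (a - a') + (1 / (1 - l)) • (b - b') = 0 := by
        rw [hbb, smul_smul, ← add_smul]
        convert zero_smul ℝ (a - a') using 2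
        field_simp
        ring
      rw [smul_sub, smul_sub] at key
      rw [← key]; abel
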